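/- If A is entrywise nonnegative and ω > 0 with all eigenvalues of A of modulus less than ω, then Ψ(t) = e^{(A-ωI)t} + ω (A-ωI)⁻¹ (e^{(A-ωI)t} − I) is entrywise nonnegative for every t ≥ 0. -/

import Mathlib

open NormedSpace

section Aux
attribute [local instance] Matrix.linftyOpNormedRing Matrix.linftyOpNormedAlgebra

variable {m : ℕ}

private noncomputable def entryCLM (m : ℕ) (i j : Fin m) :
    Matrix (Fin m) (Fin m) ℝ →L[ℝ] ℝ :=
  LinearMap.toContinuousLinearMap
    { toFun := fun M => M i j
      map_add' := fun _ _ => rfl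
      map_smul' := fun _ _ => rfl }

private noncomputable def mulCLM (C : Matrix (Fin m) (Fin m) ℝ) :
    Matrix (Fin m) (Fin m) ℝ →L[ℝ] Matrix (Fin m) (Fin m) ℝ :=
  LinearMap.toContinuousLinearMap (LinearMap.mulLeft ℝ C)

private lemma pow_entry_nonneg (A : Matrix (Fin m) (Fin m) ℝ) (hA : ∀ i j, 0 ≤ A i j) :
    ∀ n : ℕ, ∀ i j, 0 ≤ (A ^ n) i j := by
  intro n
  induction n with
  | zero =>
    intro i j
    simp only [pow_zero, Matrix.one_apply]
    split <;> norm_num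
  | succ n ih =>
    intro i j
    rw [pow_succ, Matrix.mul_apply]
    exact Finset.sum_nonneg fun k _ => mul_nonneg (ih i k) (hA k j)

private lemma exp_entry_nonneg (M : Matrix (Fin m) (Fin m) ℝ) (hM : ∀ i j, 0 ≤ M i j)
    (i j : Fin m) : 0 ≤ exp M i j := by
  have hs := (expSeries_summable' (𝕂 := ℝ) M).hasSum
  have h1 := Pi.hasSum.mp (Pi.hasSum.mp hs i) j
  have he : exp M i j = ∑' n, ((n.factorial : ℝ)⁻¹ • M ^ n) i j := by
    rw [exp_eq_tsum (𝕂 := ℝ)]; exact h1.tsum_eq.symm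
  rw [he]
  refine tsum_nonneg fun n => ?_
  rw [Matrix.smul_apply]
  exact mul_nonneg (by positivity) (pow_entry_nonneg M hM n i j)

private lemma exp_shift (A : Matrix (Fin m) (Fin m) ℝ) (ω t : ℝ) :
    exp (t • (A - ω • 1)) = Real.exp (-(t * ω)) • exp (t • A) := by
  have h1 : t • (A - ω • (1 : Matrix (Fin m) (Fin m) ℝ))
      = t • A + (-(t * ω)) • (1 : Matrix (Fin m) (Fin m) ℝ) := by
    rw [smul_sub, smul_smul, sub_eq_add_neg, ← neg_smul]
  have hcomm : Commute (t • A) ((-(t * ω)) • (1 : Matrix (Fin m) (Fin m) ℝ)) :=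
    ((Commute.one_right (t • A)).smul_right _)
  rw [h1, Matrix.exp_add_of_commute _ _ hcomm]
  have h2 : exp ((-(t * ω)) • (1 : Matrix (Fin m) (Fin m) ℝ))
      = Real.exp (-(t * ω)) • (1 : Matrix (Fin m) (Fin m) ℝ) := by
    have := (algebraMap_exp_comm (𝕂 := ℝ) (𝔸 := Matrix (Fin m) (Fin m) ℝ) (-(t * ω))).symm
    rw [Algebra.algebraMap_eq_smul_one, Algebra.algebraMap_eq_smul_one] at this
    rw [Real.exp_eq_exp_ℝ]
    exact this
  rw [h2, mul_smul_comm, mul_one]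

private lemma exp_shift_entry_nonneg (A : Matrix (Fin m) (Fin m) ℝ) (hA : ∀ i j, 0 ≤ A i j)
    (ω : ℝ) (t : ℝ) (ht : 0 ≤ t) (i j : Fin m) :
    0 ≤ exp (t • (A - ω • 1)) i j := by
  rw [exp_shift, Matrix.smul_apply]
  refine mul_nonneg (Real.exp_pos _).le (exp_entry_nonneg _ ?_ i j)
  intro i j
  rw [Matrix.smul_apply]
  exact mul_nonneg ht (hA i j)

private lemma integral_entry (B : Matrix (Fin m) (Fin m) ℝ) (t : ℝ) (i j : Fin m) :
    (∫ u in (0:ℝ)..t, exp (u • B)) i j = ∫ u in (0:ℝ)..t, exp (u • B) i j := by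
  have h : @IntervalIntegrable _ _ NormedAddGroup.toENormedAddMonoid (fun u : ℝ => exp (u • B)) MeasureTheory.volume 0 t :=
    (exp_continuous.comp (continuous_id.smul continuous_const)).intervalIntegrable _ _
  exact (ContinuousLinearMap.intervalIntegral_comp_comm (entryCLM m i j) h).symm

private lemma key_identity (B : Matrix (Fin m) (Fin m) ℝ) (hB : B⁻¹ * B = 1) (t : ℝ) :
    B⁻¹ * (exp (t • B) - 1) = ∫ u in (0:ℝ)..t, exp (u • B) := by
  have hcont : Continuous (fun u : ℝ => B * exp (u • B)) :=
    continuous_const.mul (exp_continuous.comp (continuous_id.smul continuous_const))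
  have hint : @IntervalIntegrable _ _ NormedAddGroup.toENormedAddMonoid (fun u : ℝ => B * exp (u • B)) MeasureTheory.volume 0 t :=
    hcont.intervalIntegrable _ _
  have key : exp (t • B) - 1 = ∫ u in (0:ℝ)..t, B * exp (u • B) := by
    have := intervalIntegral.integral_eq_sub_of_hasDerivAt
      (f := fun u : ℝ => exp (u • B)) (f' := fun u : ℝ => B * exp (u • B))
      (fun u _ => hasDerivAt_exp_smul_const' B u) hint
    simp only [zero_smul, exp_zero] at this
    rw [this]
  rw [key]
  have := ContinuousLinearMap.intervalIntegral_comp_comm (a := (0:ℝ)) (b := t)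
    (mulCLM B⁻¹) hint
  have h2 : (fun u : ℝ => mulCLM B⁻¹ (B * exp (u • B))) = fun u : ℝ => exp (u • B) := by
    funext u
    show B⁻¹ * (B * exp (u • B)) = exp (u • B)
    rw [← mul_assoc, hB, one_mul]
  replace this := (congrArg (fun f : ℝ → Matrix (Fin m) (Fin m) ℝ => ∫ u in (0:ℝ)..t, f u) h2).symm.trans this
  exact this.symm.trans rfl

end Aux

/-- If `A` is entrywise nonnegative and all its complex eigenvalues have
modulus `< ω`, then `Ψ(t) = e^{(A-ωI)t} + ω (A-ωI)⁻¹ (e^{(A-ωI)t} - I)` is entrywise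
nonnegative for every `t ≥ 0`. -/
theorem psi_nonneg (m : ℕ) (A : Matrix (Fin m) (Fin m) ℝ) (ω : ℝ) (hω : 0 < ω)
    (hA : ∀ i j : Fin m, 0 ≤ A i j)
    (hspec : ∀ μ : ℂ, μ ∈ spectrum ℂ (A.map Complex.ofReal) → ‖μ‖ < ω) :
    ∀ t : ℝ, 0 ≤ t → ∀ i j : Fin m,
      0 ≤ (NormedSpace.exp (t • (A - ω • (1 : Matrix (Fin m) (Fin m) ℝ))) +
            ω • (A - ω • (1 : Matrix (Fin m) (Fin m) ℝ))⁻¹ *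
              (NormedSpace.exp (t • (A - ω • 1)) - 1)) i j := by
  intro t ht i j
  set B := A - ω • (1 : Matrix (Fin m) (Fin m) ℝ) with hBdef
  -- invertibility of B
  have hdet : IsUnit B.det := by
    have hωnot : (ω : ℂ) ∉ spectrum ℂ (A.map Complex.ofReal) := by
      intro h
      have := hspec _ h
      simp only [Complex.norm_real, Real.norm_eq_abs, abs_of_pos hω] at this
      exact lt_irrefl _ this
    have hunit : IsUnit (algebraMap ℂ (Matrix (Fin m) (Fin m) ℂ) ω - A.map Complex.ofReal) :=
      spectrum.notMem_iff.mp hωnot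
    have hunit2 : IsUnit (A.map Complex.ofReal - ω • 1) := by
      have := hunit.neg
      rwa [neg_sub, Algebra.algebraMap_eq_smul_one] at this
    have hmap : B.map Complex.ofReal = A.map Complex.ofReal - ω • 1 := by
      ext i j
      by_cases h : i = j <;>
        simp [hBdef, Matrix.map_apply, Matrix.sub_apply, Matrix.smul_apply,
          Matrix.one_apply, h]
    have hdetC : IsUnit (B.map Complex.ofReal).det := by
      rw [hmap]; exact (Matrix.isUnit_iff_isUnit_det _).mp hunit2
    have hne : (B.det : ℂ) ≠ 0 := by
      have h1 : ((B.det : ℝ) : ℂ) = (B.map Complex.ofReal).det :=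
        RingHom.map_det Complex.ofRealHom B
      rw [h1]
      exact hdetC.ne_zero
    exact isUnit_iff_ne_zero.mpr (Complex.ofReal_ne_zero.mp hne)
  have hBinv : B⁻¹ * B = 1 := Matrix.nonsing_inv_mul B hdet
  rw [Matrix.add_apply]
  refine add_nonneg (exp_shift_entry_nonneg A hA ω t ht i j) ?_
  rw [Matrix.smul_mul, Matrix.smul_apply, key_identity B hBinv t, integral_entry]
  refine mul_nonneg hω.le ?_
  refine intervalIntegral.integral_nonneg ht fun u hu => ?_
  exact exp_shift_entry_nonneg A hA ω u hu.1 i j
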